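/- arXiv:0906.3079 — 3 statements merged into one kernel-verified Lean document; each statement's English description precedes it below -/
import Mathlib

section
/- (Example 3.1, derivative formula) Let z be an n×m complex matrix such that 𝟙 − zb is invertible. Then 𝟙 − bz is also invertible, the map g is complex differentiable at z, and its complex Fréchet derivative is given by (Dg)(z)(α) = (𝟙 − zb)⁻¹ · α · (𝟙 − bz)⁻¹ for every α ∈ ℂ^{n×m}. -/
open Matrix

attribute [local instance] Matrix.frobeniusNormedAddCommGroup Matrix.frobeniusNormedSpace
attribute [local instance] Matrix.frobeniusNormedRing Matrix.frobeniusNormedAlgebra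

/-- Example 3.1 (derivative formula): if `𝟙 − zb` is invertible then so is `𝟙 − bz`,
the map `g(z) = (𝟙 − zb)⁻¹ z` is complex differentiable at `z`, and its complex Fréchet
derivative is `α ↦ (𝟙 − zb)⁻¹ · α · (𝟙 − bz)⁻¹`. -/
theorem example_3_1_derivative (n m : ℕ) (hn : 1 ≤ n) (hm : 1 ≤ m)
    (b : Matrix (Fin m) (Fin n) ℂ) (z : Matrix (Fin n) (Fin m) ℂ)
    (hz : IsUnit (1 - z * b)) :
    IsUnit (1 - b * z) ∧
      DifferentiableAt ℂ (fun w : Matrix (Fin n) (Fin m) ℂ => (1 - w * b)⁻¹ * w) z ∧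
      ∀ α : Matrix (Fin n) (Fin m) ℂ,
        fderiv ℂ (fun w : Matrix (Fin n) (Fin m) ℂ => (1 - w * b)⁻¹ * w) z α =
          (1 - z * b)⁻¹ * α * (1 - b * z)⁻¹ := by
  classical
  set A : Matrix (Fin n) (Fin n) ℂ := (1 - z * b)⁻¹ with hA
  have hdet : IsUnit (1 - z * b).det := (Matrix.isUnit_iff_isUnit_det _).mp hz
  have h1 : (1 - z * b) * A = 1 := Matrix.mul_nonsing_inv _ hdet
  have hA1 : A = 1 + z * b * A := by
    rw [Matrix.sub_mul, Matrix.one_mul] at h1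
    linear_combination (norm := abel) h1
  have e : b * (A * z) = b * z + b * (z * (b * (A * z))) := by
    conv_lhs => rw [hA1]
    simp [Matrix.add_mul, Matrix.mul_add, Matrix.mul_assoc]
  have key : (1 - b * z) * (1 + b * (A * z)) = 1 := by
    calc (1 - b * z) * (1 + b * (A * z))
        = 1 + b * (A * z) - b * z - b * (z * (b * (A * z))) := by
          simp only [Matrix.mul_add, Matrix.sub_mul, Matrix.mul_sub, Matrix.add_mul,
            Matrix.one_mul, Matrix.mul_one, Matrix.mul_assoc]
          abel
      _ = 1 := by linear_combination (norm := abel) e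
  have hUnit : IsUnit (1 - b * z) :=
    ⟨⟨1 - b * z, 1 + b * (A * z), key, mul_eq_one_comm.mp key⟩, rfl⟩
  have hCinv : (1 - b * z)⁻¹ = 1 + b * (A * z) := Matrix.inv_eq_right_inv key
  -- continuous linear maps
  let mulr : Matrix (Fin n) (Fin m) ℂ →L[ℂ] Matrix (Fin n) (Fin n) ℂ :=
    LinearMap.toContinuousLinearMap
      { toFun := fun w => w * b
        map_add' := fun x y => Matrix.add_mul x y b
        map_smul' := fun c x => Matrix.smul_mul c x b }
  let B : Matrix (Fin n) (Fin n) ℂ →L[ℂ] Matrix (Fin n) (Fin m) ℂ →L[ℂ] Matrix (Fin n) (Fin m) ℂ :=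
    LinearMap.toContinuousLinearMap
      { toFun := fun x => LinearMap.toContinuousLinearMap
          { toFun := fun y => x * y
            map_add' := fun u v => Matrix.mul_add x u v
            map_smul' := fun c u => (Matrix.mul_smul x c u) }
        map_add' := by intro u v; ext w; simp [Matrix.add_mul]
        map_smul' := by intro c u; ext w; simp [Matrix.smul_mul] }
  -- derivative of w ↦ 1 - w * b
  have hf1 : HasFDerivAt (fun w : Matrix (Fin n) (Fin m) ℂ => 1 - w * b) (-mulr) z :=
    mulr.hasFDerivAt.const_sub 1
  -- derivative of inverse
  have hinvA : (↑hz.unit⁻¹ : Matrix (Fin n) (Fin n) ℂ) = A := by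
    rw [Matrix.coe_units_inv, hz.unit_spec]
  have hinv0 := hasFDerivAt_ringInverse (𝕜 := ℂ) hz.unit
  rw [hz.unit_spec, hinvA] at hinv0
  have hinv : HasFDerivAt (fun w : Matrix (Fin n) (Fin m) ℂ => Ring.inverse (1 - w * b))
      ((-(ContinuousLinearMap.mulLeftRight ℂ _ A A)).comp (-mulr)) z := by
    have := HasFDerivAt.comp (g := Ring.inverse) z hinv0 hf1
    exact this
  have hid : HasFDerivAt (fun w : Matrix (Fin n) (Fin m) ℂ => w)
      (ContinuousLinearMap.id ℂ _) z := hasFDerivAt_id z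
  have hmul := B.hasFDerivAt_of_bilinear hinv hid
  have hgeq : (fun w : Matrix (Fin n) (Fin m) ℂ => (1 - w * b)⁻¹ * w)
      = fun w => B (Ring.inverse (1 - w * b)) w := by
    funext w
    simp [B, Matrix.nonsing_inv_eq_ringInverse]
  erw [← hgeq] at hmul
  refine ⟨hUnit, hmul.differentiableAt, fun α => ?_⟩
  erw [hmul.fderiv]
  have hRiA : Ring.inverse (1 - z * b) = A := (Matrix.nonsing_inv_eq_ringInverse _).symm
  simp only [ContinuousLinearMap.add_apply, ContinuousLinearMap.precompR_apply,
    ContinuousLinearMap.precompL_apply, ContinuousLinearMap.coe_comp', Function.comp_apply,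
    ContinuousLinearMap.neg_apply, ContinuousLinearMap.mulLeftRight_apply,
    ContinuousLinearMap.id_apply, hRiA]
  change B A α + B (-(A * (-(α * b)) * A)) z = _
  simp [B, mulr, hCinv, LinearMap.toContinuousLinearMap, Matrix.mul_add, Matrix.mul_assoc]
end

section
/- (Key step in the proof of Proposition 2.2) Let r, s be polynomials in n complex variables with s ≠ 0, and let a ∈ ℂⁿ be a point with s(a) = 0 and r(a) ≠ 0. Then there exists an index k ∈ {1,…,n} such that the rational function ∂(r/s)/∂z_k = (s·∂r/∂z_k − r·∂s/∂z_k)/s² is not regular at a; precisely, for all polynomials u, v in n variables with v(a) ≠ 0 one has v·(s·∂r/∂z_k − r·∂s/∂z_k) ≠ u·s². -/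
open MvPolynomial
open Finsupp UniqueFactorizationMonoid

lemma coeff_pderiv_aux {n : ℕ} (k : Fin n) (d : Fin n →₀ ℕ) (hd : d k ≠ 0)
    (p : MvPolynomial (Fin n) ℂ) :
    coeff (d - Finsupp.single k 1) (pderiv k p) = coeff d p * (d k : ℂ) := by
  induction p using MvPolynomial.induction_on' with
  | monomial s a =>
    rw [pderiv_monomial]
    by_cases hsd : s = d
    · subst hsd
      rw [coeff_monomial, coeff_monomial, if_pos rfl, if_pos rfl]
    · rw [coeff_monomial, coeff_monomial, if_neg hsd, zero_mul]
      by_cases hsk : s k = 0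
      · split_ifs <;> simp [hsk]
      · rw [if_neg]
        intro he
        apply hsd
        have h1 : Finsupp.single k 1 ≤ s :=
          Finsupp.single_le_iff.mpr (Nat.one_le_iff_ne_zero.mpr hsk)
        have h2 : Finsupp.single k 1 ≤ d :=
          Finsupp.single_le_iff.mpr (Nat.one_le_iff_ne_zero.mpr hd)
        calc s = s - Finsupp.single k 1 + Finsupp.single k 1 := (tsub_add_cancel_of_le h1).symm
        _ = d - Finsupp.single k 1 + Finsupp.single k 1 := by rw [he]
        _ = d := tsub_add_cancel_of_le h2
  | add p q hp hq =>
    simp only [map_add, coeff_add, hp, hq, add_mul]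

/-- The lexicographic degree of a multivariate polynomial. -/
noncomputable abbrev lexDeg {n : ℕ} (p : MvPolynomial (Fin n) ℂ) : Lex (Fin n →₀ ℕ) :=
  AddMonoidAlgebra.supDegree (toLex : (Fin n →₀ ℕ) → Lex (Fin n →₀ ℕ)) p

lemma lex_nonneg {n : ℕ} (x : Lex (Fin n →₀ ℕ)) : (0 : Lex (Fin n →₀ ℕ)) ≤ x :=
  Finsupp.toLex_monotone (zero_le : (0 : Fin n →₀ ℕ) ≤ ofLex x)

lemma lexDeg_le_of_dvd {n : ℕ} {p q : MvPolynomial (Fin n) ℂ} (h : p ∣ q) (hq : q ≠ 0) :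
    lexDeg p ≤ lexDeg q := by
  obtain ⟨c, rfl⟩ := h
  have hp : p ≠ 0 := left_ne_zero_of_mul hq
  have hc : c ≠ 0 := right_ne_zero_of_mul hq
  have hlc : AddMonoidAlgebra.leadingCoeff (toLex : (Fin n →₀ ℕ) → Lex (Fin n →₀ ℕ)) p *
      AddMonoidAlgebra.leadingCoeff (toLex : (Fin n →₀ ℕ) → Lex (Fin n →₀ ℕ)) c ≠ 0 := by
    apply mul_ne_zero
    · exact fun h0 => hp ((AddMonoidAlgebra.leadingCoeff_eq_zero toLex.injective).mp h0)
    · exact fun h0 => hc ((AddMonoidAlgebra.leadingCoeff_eq_zero toLex.injective).mp h0)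
  have := AddMonoidAlgebra.supDegree_mul (R := ℂ) (A := (Fin n →₀ ℕ))
    (D := (toLex : (Fin n →₀ ℕ) → Lex (Fin n →₀ ℕ)))
    toLex.injective (fun _ _ => rfl) hlc hp hc
  unfold lexDeg
  rw [this]
  exact le_add_of_nonneg_right (lex_nonneg _)

lemma lexDeg_pderiv_lt {n : ℕ} {k : Fin n} {p : MvPolynomial (Fin n) ℂ}
    (h : pderiv k p ≠ 0) : lexDeg (pderiv k p) < lexDeg p := by
  have key : ∀ s' ∈ (pderiv k p).support, toLex s' < lexDeg p := by
    intro s' hs'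
    set d : Fin n →₀ ℕ := s' + Finsupp.single k 1 with hdd
    have hdk : d k ≠ 0 := by simp [hdd]
    have hds : d - Finsupp.single k 1 = s' := add_tsub_cancel_right s' _
    have hco := coeff_pderiv_aux k d hdk p
    rw [hds] at hco
    have hs'ne : coeff s' (pderiv k p) ≠ 0 := MvPolynomial.mem_support_iff.mp hs'
    have hdp : coeff d p ≠ 0 := by
      intro h0; rw [h0, zero_mul] at hco; exact hs'ne hco
    have hdmem : d ∈ p.support := MvPolynomial.mem_support_iff.mpr hdp
    have hle : toLex d ≤ lexDeg p := Finset.le_sup hdmem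
    have hlt : toLex s' < toLex d := by
      have hlt' : s' < d := by
        rw [hdd]
        exact lt_add_of_pos_right s' (by
          rw [pos_iff_ne_zero]
          exact fun h0 => one_ne_zero (Finsupp.single_eq_zero.mp h0))
      exact (Finsupp.toLex_monotone.strictMono_of_injective toLex.injective) hlt'
    exact lt_of_lt_of_le hlt hle
  obtain ⟨a, ha, he⟩ := AddMonoidAlgebra.exists_supDegree_mem_support
    (toLex : (Fin n →₀ ℕ) → Lex (Fin n →₀ ℕ)) h
  unfold lexDeg
  rw [he]
  exact key a ha

/-- Key step in the proof of Proposition 2.2: if `s(a) = 0` and `r(a) ≠ 0`, then for some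
variable `z_k` the rational function `(s·∂r/∂z_k − r·∂s/∂z_k)/s²` is not regular at `a`:
no representation `u/v` with `v(a) ≠ 0` is possible. -/
theorem key_step_prop_2_2 (n : ℕ) (r s : MvPolynomial (Fin n) ℂ) (hs : s ≠ 0)
    (a : Fin n → ℂ) (hsa : eval a s = 0) (hra : eval a r ≠ 0) :
    ∃ k : Fin n, ∀ u v : MvPolynomial (Fin n) ℂ, eval a v ≠ 0 →
      v * (s * pderiv k r - r * pderiv k s) ≠ u * s ^ 2 := by
  -- find an irreducible factor p of s vanishing at a
  obtain ⟨w, hw⟩ := (factors_prod hs)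
  have hne : eval a (↑w : MvPolynomial (Fin n) ℂ) ≠ 0 :=
    (w.isUnit.map (eval a)).ne_zero
  have hprod : eval a ((factors s).prod) = 0 := by
    have := congrArg (eval a) hw
    rw [map_mul] at this
    rw [hsa] at this
    rcases mul_eq_zero.mp this with h | h
    · exact h
    · exact absurd h hne
  rw [map_multiset_prod] at hprod
  rw [Multiset.prod_eq_zero_iff] at hprod
  obtain ⟨p, hmem, hpa⟩ := Multiset.mem_map.mp hprod
  have hpirr : Irreducible p := irreducible_of_factor p hmem
  have hpprime : Prime p := prime_of_factor p hmem
  have hpdvds : p ∣ s := dvd_of_mem_factors hmem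
  -- p has a nonzero exponent d in its support
  have hd : ∃ d ∈ p.support, d ≠ 0 := by
    by_contra hcon
    push_neg at hcon
    have hpC : p = C (coeff 0 p) := by
      ext m
      rw [coeff_C]
      by_cases hm : m = 0
      · subst hm; rw [if_pos rfl]
      · rw [if_neg (fun h => hm h.symm)]
        by_contra h0
        exact hm (hcon m (MvPolynomial.mem_support_iff.mpr h0))
    have : eval a p = coeff 0 p := by rw [hpC]; simp
    rw [hpa] at this
    rw [← this] at hpC
    rw [map_zero] at hpC
    exact hpirr.ne_zero hpC
  obtain ⟨d, hdmem, hdne⟩ := hd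
  obtain ⟨k, hdk⟩ : ∃ k, d k ≠ 0 := by
    by_contra hcon
    push_neg at hcon
    exact hdne (Finsupp.ext hcon)
  -- pderiv k p ≠ 0
  have hpk : pderiv k p ≠ 0 := by
    intro h0
    have := coeff_pderiv_aux k d hdk p
    rw [h0] at this
    simp only [coeff_zero] at this
    have := this.symm
    rcases mul_eq_zero.mp this with h | h
    · exact MvPolynomial.mem_support_iff.mp hdmem h
    · exact hdk (Nat.cast_eq_zero.mp h)
  refine ⟨k, fun u v hv heq => ?_⟩
  -- extract maximal power of p in s
  obtain ⟨m, t, hpt, hst⟩ := WfDvdMonoid.max_power_factor hs hpirr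
  have hm : m ≠ 0 := by
    rintro rfl
    rw [pow_zero, one_mul] at hst
    exact hpt (hst ▸ hpdvds)
  obtain ⟨m', rfl⟩ : ∃ m', m = m' + 1 :=
    ⟨m - 1, (Nat.succ_pred_eq_of_pos (Nat.pos_of_ne_zero hm)).symm⟩
  set X : MvPolynomial (Fin n) ℂ :=
    p * t * pderiv k r - ((m' + 1 : ℕ) : MvPolynomial (Fin n) ℂ) * r * pderiv k p * t
      - r * p * pderiv k t with hX
  have hXs : s * pderiv k r - r * pderiv k s = p ^ m' * X := by
    rw [hX, hst, pderiv_mul, pderiv_pow, Nat.add_sub_cancel]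
    ring
  rw [hXs, hst] at heq
  have hp0 : (p : MvPolynomial (Fin n) ℂ) ^ m' ≠ 0 := pow_ne_zero _ hpirr.ne_zero
  have h2 : v * X = u * (p ^ (m' + 2) * t ^ 2) := by
    apply mul_left_cancel₀ hp0
    calc p ^ m' * (v * X) = v * (p ^ m' * X) := by ring
    _ = u * (p ^ (m' + 1) * t) ^ 2 := heq
    _ = p ^ m' * (u * (p ^ (m' + 2) * t ^ 2)) := by ring
  have hpdvd : p ∣ v * X := ⟨u * (p ^ (m' + 1) * t ^ 2), by rw [h2]; ring⟩
  have hpv : ¬ p ∣ v := by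
    rintro ⟨w', hw'⟩
    apply hv
    rw [hw', map_mul, hpa, zero_mul]
  have hpX : p ∣ X := (hpprime.2.2 v X hpdvd).resolve_left hpv
  have h3 : p ∣ ((m' + 1 : ℕ) : MvPolynomial (Fin n) ℂ) * r * pderiv k p * t := by
    have hid : ((m' + 1 : ℕ) : MvPolynomial (Fin n) ℂ) * r * pderiv k p * t
        = p * (t * pderiv k r) - p * (r * pderiv k t) - X := by
      rw [hX]; ring
    rw [hid]
    exact dvd_sub (dvd_sub (dvd_mul_right p _) (dvd_mul_right p _)) hpX
  have hpc : ¬ p ∣ ((m' + 1 : ℕ) : MvPolynomial (Fin n) ℂ) := by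
    rintro ⟨w', hw'⟩
    have := congrArg (eval a) hw'
    rw [map_natCast, map_mul, hpa, zero_mul] at this
    exact Nat.cast_ne_zero.mpr (Nat.succ_ne_zero m') this
  have hpr : ¬ p ∣ r := by
    rintro ⟨w', hw'⟩
    apply hra
    rw [hw', map_mul, hpa, zero_mul]
  have h4 : p ∣ pderiv k p := by
    rcases hpprime.2.2 _ _ h3 with h | h
    · rcases hpprime.2.2 _ _ h with h' | h'
      · rcases hpprime.2.2 _ _ h' with h'' | h''
        · exact absurd h'' hpc
        · exact absurd h'' hpr
      · exact h'
    · exact absurd h hpt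
  have hle := lexDeg_le_of_dvd h4 hpk
  have hlt := lexDeg_pderiv_lt hpk
  exact absurd hle (not_le.mpr hlt)
end

section
/- (Eigenvalues of ad η are integers ≥ −1) Let f be a holomorphic map from the open ball B = B(0,R) ⊆ E to E that is not identically zero on B, and let c ∈ ℂ satisfy (Df)(z)(z) = c·f(z) for all z ∈ B. Then c is a non-negative integer, i.e. there exists d ∈ ℕ with c = d. (Equivalently, in the grading 𝔩 = ⊕ₘ 𝔩^m by eigenspaces of ad η one has 𝔩^m = 0 for m < −1.) -/
open Metric

/-- Eigenvalues of `ad η` are integers `≥ −1`: if a holomorphic vector field `f` on the ball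
`B(0,R)`, not identically zero, satisfies `(Df)(z)(z) = c·f(z)` on the ball, then `c` is a
non-negative integer. -/
theorem euler_eigenvalues_nonneg_int {E : Type*} [NormedAddCommGroup E] [NormedSpace ℂ E]
    [FiniteDimensional ℂ E] (R : ℝ) (hR : 0 < R)
    (f : E → E) (hf : DifferentiableOn ℂ f (Metric.ball (0 : E) R))
    (hne : ∃ z ∈ Metric.ball (0 : E) R, f z ≠ 0)
    (c : ℂ) (heig : ∀ z ∈ Metric.ball (0 : E) R, fderiv ℂ f z z = c • f z) :
    ∃ d : ℕ, c = (d : ℂ) := by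
  obtain ⟨z₀, hz₀, hfz₀⟩ := hne
  by_cases hz0 : z₀ = 0
  · -- at 0, fderiv f 0 0 = 0, so c • f 0 = 0, hence c = 0
    refine ⟨0, ?_⟩
    have h := (heig 0 (by simpa using hR)).symm
    simp only [map_zero] at h
    subst hz0
    rcases smul_eq_zero.mp h with hc | h0
    · simpa using hc
    · exact absurd h0 hfz₀
  · by_contra hc
    push_neg at hc
    set r : ℝ := R / ‖z₀‖ with hr
    have hz₀pos : 0 < ‖z₀‖ := norm_pos_iff.mpr hz0
    have hr1 : 1 < r := by
      rw [hr, lt_div_iff₀ hz₀pos, one_mul]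
      simpa [mem_ball, dist_eq_norm] using hz₀
    set φ : ℂ → E := fun t => f (t • z₀) with hφ
    have hmem : ∀ t : ℂ, t ∈ ball (0 : ℂ) r → t • z₀ ∈ ball (0 : E) R := by
      intro t ht
      simp only [mem_ball, dist_zero_right] at ht ⊢
      rw [norm_smul]
      calc ‖t‖ * ‖z₀‖ < r * ‖z₀‖ := by gcongr
        _ = R := by rw [hr, div_mul_cancel₀ R hz₀pos.ne']
    -- φ has derivative fderiv f (t•z₀) z₀ on the ball
    have hder : ∀ t : ℂ, t ∈ ball (0 : ℂ) r →
        HasDerivAt φ (fderiv ℂ f (t • z₀) z₀) t := by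
      intro t ht
      have h1 : HasDerivAt (fun s : ℂ => s • z₀) ((1 : ℂ) • z₀) t :=
        (hasDerivAt_id t).smul_const z₀
      have h2 : HasFDerivAt f (fderiv ℂ f (t • z₀)) (t • z₀) :=
        (hf.differentiableAt (isOpen_ball.mem_nhds (hmem t ht))).hasFDerivAt
      simpa [hφ, Function.comp_def] using h2.comp_hasDerivAt t h1
    have hφdiff : DifferentiableOn ℂ φ (ball (0 : ℂ) r) := fun t ht =>
      ((hder t ht).differentiableAt).differentiableWithinAt
    have hφan : AnalyticOnNhd ℂ φ (ball (0 : ℂ) r) :=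
      hφdiff.analyticOnNhd isOpen_ball
    -- all iterated derivatives are analytic on the ball
    have hA : ∀ n : ℕ, AnalyticOnNhd ℂ (iteratedDeriv n φ) (ball (0 : ℂ) r) := by
      intro n
      induction n with
      | zero => simpa using hφan
      | succ k ih => rw [iteratedDeriv_succ]; exact ih.deriv
    have hDer : ∀ (n : ℕ) (t : ℂ), t ∈ ball (0 : ℂ) r →
        HasDerivAt (iteratedDeriv n φ) (iteratedDeriv (n + 1) φ t) t := by
      intro n t ht
      rw [iteratedDeriv_succ]
      exact ((hA n t ht).differentiableAt).hasDerivAt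
    -- key inductive identity
    have key : ∀ (n : ℕ) (t : ℂ), t ∈ ball (0 : ℂ) r →
        t • iteratedDeriv (n + 1) φ t = (c - n) • iteratedDeriv n φ t := by
      intro n
      induction n with
      | zero =>
        intro t ht
        have h1 : iteratedDeriv 1 φ t = fderiv ℂ f (t • z₀) z₀ := by
          rw [iteratedDeriv_one]
          exact (hder t ht).deriv
        rw [h1]
        have := heig (t • z₀) (hmem t ht)
        calc t • (fderiv ℂ f (t • z₀)) z₀ = fderiv ℂ f (t • z₀) (t • z₀) := by
              rw [map_smul]
          _ = (c - (0 : ℕ)) • φ t := by rw [this, hφ]; norm_num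
      | succ k ih =>
        intro t ht
        -- differentiate the identity for k at t
        have hL : HasDerivAt (fun s : ℂ => s • iteratedDeriv (k + 1) φ s)
            (t • iteratedDeriv (k + 2) φ t + (1 : ℂ) • iteratedDeriv (k + 1) φ t) t := by
          have := (hasDerivAt_id' t).smul (hDer (k + 1) t ht)
          simp only [one_smul] at this ⊢; convert this using 1; funext s; rfl
        have hR' : HasDerivAt (fun s : ℂ => (c - k) • iteratedDeriv k φ s)
            ((c - k) • iteratedDeriv (k + 1) φ t) t :=
          (hDer k t ht).const_smul (c - (k : ℂ))
        have heq : (fun s : ℂ => s • iteratedDeriv (k + 1) φ s)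
            =ᶠ[nhds t] (fun s : ℂ => (c - k) • iteratedDeriv k φ s) := by
          filter_upwards [isOpen_ball.mem_nhds ht] with s hs
          exact ih s hs
        have hL' : HasDerivAt (fun s : ℂ => (c - k) • iteratedDeriv k φ s)
            (t • iteratedDeriv (k + 2) φ t + (1 : ℂ) • iteratedDeriv (k + 1) φ t) t :=
          hL.congr_of_eventuallyEq heq.symm
        have := hL'.unique hR'
        have h2 : t • iteratedDeriv (k + 2) φ t
            = (c - k) • iteratedDeriv (k + 1) φ t - iteratedDeriv (k + 1) φ t := by
          rw [← this]; simp only [one_smul]; abel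
        show t • iteratedDeriv (k + 2) φ t = _
        rw [h2]
        push_cast
        module
    -- at t = 0 : (c - n) • iteratedDeriv n φ 0 = 0
    have hzero : ∀ n : ℕ, iteratedDeriv n φ 0 = 0 := by
      intro n
      have h0 : (0 : ℂ) ∈ ball (0 : ℂ) r := by
        simp [mem_ball, lt_trans one_pos hr1]
      have := key n 0 h0
      rw [zero_smul] at this
      have hcn : c - (n : ℂ) ≠ 0 := sub_ne_zero.mpr (hc n)
      exact (smul_eq_zero.mp this.symm).resolve_left hcn
    -- Taylor series: φ = 0 on the ball, contradiction with φ 1 = f z₀ ≠ 0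
    have h1mem : (1 : ℂ) ∈ ball (0 : ℂ) r := by
      simp [mem_ball, hr1]
    have := Complex.taylorSeries_eq_on_ball hφdiff h1mem
    simp only [hzero, smul_zero, tsum_zero] at this
    exact hfz₀ (by simpa [hφ] using this.symm)
end
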